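/- Let k ≥ 2 be an integer, n ≥ 2, and let x₀, x₁, ..., x_{n-1} be i.i.d. random variables uniformly distributed on {1, 2, ..., k}. Define the perimeter P_n := 2n + x₀ + x_{n-1} + Σ_{i=1}^{n-1} |x_i - x_{i-1}|. Then E(P_n) = ((3k + 2k² + 1) + (k² + 6k - 1)·n) / (3k). -/

import Mathlib

open MeasureTheory ProbabilityTheory
open scoped ENNReal

/-- The uniform probability measure on the integers `{1, ..., k}` (as a measure on `ℕ`). -/
noncomputable def unifMeasure (k : ℕ) : Measure ℕ :=
  (k : ℝ≥0∞)⁻¹ • ∑ i ∈ Finset.Icc 1 k, Measure.dirac i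

set_option linter.unusedSectionVars false

lemma integrable_dirac'' (f : ℕ → ℝ) (i : ℕ) : Integrable f (Measure.dirac i) := by
  refine ⟨(measurable_from_top (f := f)).aestronglyMeasurable, ?_⟩
  rw [HasFiniteIntegral, lintegral_dirac]
  exact ENNReal.coe_lt_top

lemma unif_integral (k : ℕ) (f : ℕ → ℝ) :
    ∫ a, f a ∂(unifMeasure k) = (k : ℝ)⁻¹ * ∑ i ∈ Finset.Icc 1 k, f i := by
  rw [unifMeasure, integral_smul_measure,
    integral_finset_sum_measure (fun i _ => integrable_dirac'' f i)]
  simp [integral_dirac, ENNReal.toReal_inv, smul_eq_mul]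

lemma unif_apply_compl (k : ℕ) : unifMeasure k (Set.Icc 1 k)ᶜ = 0 := by
  rw [unifMeasure]
  rw [Measure.smul_apply, Measure.finset_sum_apply]
  have : ∀ i ∈ Finset.Icc 1 k, Measure.dirac i (Set.Icc 1 k)ᶜ = 0 := by
    intro i hi
    rw [Measure.dirac_apply]
    simp only [Set.indicator_apply, Set.mem_compl_iff, Set.mem_Icc]
    simp only [Finset.mem_Icc] at hi
    simp [hi.1, hi.2]
  rw [Finset.sum_congr rfl this]
  simp

lemma unif_prob (k : ℕ) (hk : 1 ≤ k) : IsProbabilityMeasure (unifMeasure k) := by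
  constructor
  rw [unifMeasure, Measure.smul_apply, Measure.finset_sum_apply]
  simp [Measure.dirac_apply]
  rw [ENNReal.inv_mul_cancel]
  · simp; omega
  · exact ENNReal.natCast_ne_top k

lemma sum_Icc_id (k : ℕ) : ∑ i ∈ Finset.Icc 1 k, (i : ℝ) = k * (k + 1) / 2 := by
  induction k with
  | zero => simp
  | succ m ih =>
    rw [Finset.sum_Icc_succ_top (by omega : 1 ≤ m + 1), ih]
    push_cast; ring

lemma sum_Icc_const (k : ℕ) (c : ℝ) : ∑ _i ∈ Finset.Icc 1 k, c = k * c := by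
  rw [Finset.sum_const, Nat.card_Icc]
  simp [nsmul_eq_mul]

lemma double_sum_abs (k : ℕ) :
    ∑ i ∈ Finset.Icc 1 k, ∑ j ∈ Finset.Icc 1 k, |(i : ℝ) - j| = k * (k ^ 2 - 1) / 3 := by
  induction k with
  | zero => simp
  | succ m ih =>
    have htop : ∀ i ∈ Finset.Icc 1 m, |(i : ℝ) - (m + 1 : ℕ)| = (m : ℝ) + 1 - i := by
      intro i hi
      simp only [Finset.mem_Icc] at hi
      rw [abs_of_nonpos]
      · push_cast; ring
      · push_cast
        have : (i : ℝ) ≤ m := by exact_mod_cast hi.2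
        linarith
    have hsum1 : ∑ i ∈ Finset.Icc 1 m, ((m : ℝ) + 1 - i) = m * (m + 1) / 2 := by
      rw [Finset.sum_sub_distrib, sum_Icc_const, sum_Icc_id]
      ring
    rw [Finset.sum_Icc_succ_top (by omega : 1 ≤ m + 1)]
    have hinner : ∀ i ∈ Finset.Icc 1 m,
        ∑ j ∈ Finset.Icc 1 (m + 1), |(i : ℝ) - j| =
          (∑ j ∈ Finset.Icc 1 m, |(i : ℝ) - j|) + ((m : ℝ) + 1 - i) := by
      intro i hi
      rw [Finset.sum_Icc_succ_top (by omega : 1 ≤ m + 1)]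
      congr 1
      have := htop i hi
      rw [abs_sub_comm] at this
      rw [abs_sub_comm, this]
    have htop' : ∀ i ∈ Finset.Icc 1 m, |((m + 1 : ℕ) : ℝ) - i| = (m : ℝ) + 1 - i := by
      intro i hi; rw [abs_sub_comm]; exact htop i hi
    rw [Finset.sum_congr rfl hinner, Finset.sum_add_distrib, ih, hsum1,
      Finset.sum_Icc_succ_top (by omega : 1 ≤ m + 1),
      Finset.sum_congr rfl htop', hsum1, sub_self, abs_zero]
    push_cast; ring

section
variable {Ω : Type*} [MeasurableSpace Ω] (μ : Measure Ω) [IsProbabilityMeasure μ]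

lemma ae_mem_Icc {k : ℕ} (X : Ω → ℕ) (hm : Measurable X)
    (hd : Measure.map X μ = unifMeasure k) : ∀ᵐ ω ∂μ, X ω ∈ Set.Icc 1 k := by
  have h : μ (X ⁻¹' (Set.Icc 1 k)ᶜ) = 0 := by
    rw [← Measure.map_apply hm (MeasurableSet.compl (by trivial)), hd, unif_apply_compl]
  filter_upwards [measure_eq_zero_iff_ae_notMem.mp h] with ω hω
  simpa using hω

lemma integrable_cast {k : ℕ} (X : Ω → ℕ) (hm : Measurable X)
    (hd : Measure.map X μ = unifMeasure k) :
    Integrable (fun ω => (X ω : ℝ)) μ := by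
  refine ⟨(measurable_from_top.comp hm).aestronglyMeasurable, ?_⟩
  refine HasFiniteIntegral.of_bounded (C := (k : ℝ)) ?_
  filter_upwards [ae_mem_Icc μ X hm hd] with ω hω
  rw [Real.norm_eq_abs, abs_of_nonneg (by positivity)]
  exact_mod_cast hω.2

lemma integral_cast {k : ℕ} (X : Ω → ℕ) (hm : Measurable X)
    (hd : Measure.map X μ = unifMeasure k) (hk : 1 ≤ k) :
    ∫ ω, (X ω : ℝ) ∂μ = ((k : ℝ) + 1) / 2 := by
  rw [← integral_map hm.aemeasurable (measurable_from_top (f := fun a : ℕ => (a : ℝ))).aestronglyMeasurable,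
    hd, unif_integral, sum_Icc_id]
  have hk0 : (k : ℝ) ≠ 0 := by positivity
  field_simp

lemma integral_abs_sub {k : ℕ} (X Y : Ω → ℕ) (hmX : Measurable X) (hmY : Measurable Y)
    (hdX : Measure.map X μ = unifMeasure k) (hdY : Measure.map Y μ = unifMeasure k)
    (hk : 1 ≤ k) (hind : IndepFun X Y μ) :
    ∫ ω, |(X ω : ℝ) - (Y ω : ℝ)| ∂μ = ((k : ℝ) ^ 2 - 1) / (3 * k) := by
  haveI := unif_prob k hk
  have hmap : μ.map (fun ω => (X ω, Y ω)) = (unifMeasure k).prod (unifMeasure k) := by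
    have h := (indepFun_iff_map_prod_eq_prod_map_map hmX.aemeasurable hmY.aemeasurable).mp hind
    rw [h, hdX, hdY]
  have hf : Measurable (fun p : ℕ × ℕ => |(p.1 : ℝ) - (p.2 : ℝ)|) :=
    ((measurable_from_top.comp measurable_fst).sub
      (measurable_from_top.comp measurable_snd)).abs
  have h1 : ((unifMeasure k).prod (unifMeasure k)) {p : ℕ × ℕ | p.1 ∉ Set.Icc 1 k} = 0 := by
    have : {p : ℕ × ℕ | p.1 ∉ Set.Icc 1 k} = (Set.Icc 1 k)ᶜ ×ˢ (Set.univ : Set ℕ) := by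
      ext p; simp
    rw [this, Measure.prod_prod, unif_apply_compl, zero_mul]
  have h2 : ((unifMeasure k).prod (unifMeasure k)) {p : ℕ × ℕ | p.2 ∉ Set.Icc 1 k} = 0 := by
    have : {p : ℕ × ℕ | p.2 ∉ Set.Icc 1 k} = (Set.univ : Set ℕ) ×ˢ (Set.Icc 1 k)ᶜ := by
      ext p; simp
    rw [this, Measure.prod_prod, unif_apply_compl, mul_zero]
  have hint : Integrable (fun p : ℕ × ℕ => |(p.1 : ℝ) - (p.2 : ℝ)|)
      ((unifMeasure k).prod (unifMeasure k)) := by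
    refine ⟨hf.aestronglyMeasurable, HasFiniteIntegral.of_bounded (C := 2 * k) ?_⟩
    filter_upwards [measure_eq_zero_iff_ae_notMem.mp h1, measure_eq_zero_iff_ae_notMem.mp h2]
      with p hp1 hp2
    simp only [Set.mem_setOf_eq, not_not] at hp1 hp2
    rw [Real.norm_eq_abs, abs_abs]
    have b1 : (p.1 : ℝ) ≤ k := by exact_mod_cast hp1.2
    have b2 : (p.2 : ℝ) ≤ k := by exact_mod_cast hp2.2
    have c1 : (0 : ℝ) ≤ p.1 := Nat.cast_nonneg _
    have c2 : (0 : ℝ) ≤ p.2 := Nat.cast_nonneg _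
    rw [abs_sub_le_iff]
    constructor <;> linarith
  have step1 : ∫ ω, |(X ω : ℝ) - (Y ω : ℝ)| ∂μ
      = ∫ p : ℕ × ℕ, |(p.1 : ℝ) - (p.2 : ℝ)| ∂(μ.map (fun ω => (X ω, Y ω))) := by
    rw [integral_map (hmX.prodMk hmY).aemeasurable hf.aestronglyMeasurable]
  rw [step1, hmap, MeasureTheory.integral_prod _ hint]
  simp only [unif_integral]
  rw [← Finset.mul_sum, double_sum_abs]
  have hk0 : (k : ℝ) ≠ 0 := by positivity
  rw [eq_div_iff (by positivity : (3 : ℝ) * k ≠ 0)]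
  field_simp

end

theorem mean_perimeter_uniform
    {Ω : Type*} [MeasurableSpace Ω] (μ : Measure Ω) [IsProbabilityMeasure μ]
    (k : ℕ) (hk : 2 ≤ k) (n : ℕ) (hn : 2 ≤ n) (x : ℕ → Ω → ℕ)
    (hmeas : ∀ i, i < n → Measurable (x i))
    (hdist : ∀ i, i < n → Measure.map (x i) μ = unifMeasure k)
    (hindep : iIndepFun (fun i : Fin n => x i) μ) :
    ∫ ω, ((2 * n : ℝ) + (x 0 ω : ℝ) + (x (n - 1) ω : ℝ)
        + ∑ i ∈ Finset.Icc 1 (n - 1), |(x i ω : ℝ) - (x (i - 1) ω : ℝ)|) ∂μ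
      = ((3 * (k : ℝ) + 2 * (k : ℝ) ^ 2 + 1)
          + ((k : ℝ) ^ 2 + 6 * (k : ℝ) - 1) * (n : ℝ)) / (3 * (k : ℝ)) := by
  have hk1 : 1 ≤ k := by omega
  have h0n : 0 < n := by omega
  have hlt : ∀ i ∈ Finset.Icc 1 (n - 1), i < n ∧ i - 1 < n := by
    intro i hi; simp only [Finset.mem_Icc] at hi; omega
  have I0 : Integrable (fun ω => (x 0 ω : ℝ)) μ :=
    integrable_cast μ (x 0) (hmeas 0 h0n) (hdist 0 h0n)
  have Il : Integrable (fun ω => (x (n - 1) ω : ℝ)) μ :=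
    integrable_cast μ (x (n - 1)) (hmeas _ (by omega)) (hdist _ (by omega))
  have Ig : ∀ i ∈ Finset.Icc 1 (n - 1),
      Integrable (fun ω => |(x i ω : ℝ) - (x (i - 1) ω : ℝ)|) μ := by
    intro i hi
    obtain ⟨h1, h2⟩ := hlt i hi
    exact ((integrable_cast μ (x i) (hmeas i h1) (hdist i h1)).sub
      (integrable_cast μ (x (i - 1)) (hmeas _ h2) (hdist _ h2))).abs
  have Isum : Integrable
      (fun ω => ∑ i ∈ Finset.Icc 1 (n - 1), |(x i ω : ℝ) - (x (i - 1) ω : ℝ)|) μ :=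
    integrable_finset_sum _ Ig
  have Ic : Integrable (fun _ : Ω => 2 * (n : ℝ)) μ := integrable_const _
  have Ia : Integrable (fun ω => 2 * (n : ℝ) + (x 0 ω : ℝ)) μ := Ic.add I0
  have Ib : Integrable (fun ω => 2 * (n : ℝ) + (x 0 ω : ℝ) + (x (n - 1) ω : ℝ)) μ := Ia.add Il
  rw [integral_add Ib Isum, integral_add Ia Il, integral_add Ic I0, integral_const,
    integral_cast μ (x 0) (hmeas 0 h0n) (hdist 0 h0n) hk1,
    integral_cast μ (x (n - 1)) (hmeas _ (by omega)) (hdist _ (by omega)) hk1,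
    integral_finset_sum _ Ig]
  have hterm : ∀ i ∈ Finset.Icc 1 (n - 1),
      ∫ ω, |(x i ω : ℝ) - (x (i - 1) ω : ℝ)| ∂μ = ((k : ℝ) ^ 2 - 1) / (3 * k) := by
    intro i hi
    obtain ⟨h1, h2⟩ := hlt i hi
    have hne : (⟨i, h1⟩ : Fin n) ≠ ⟨i - 1, h2⟩ := by
      simp only [Finset.mem_Icc] at hi
      intro h
      have := congrArg Fin.val h
      simp only at this
      omega
    have hind := hindep.indepFun hne
    exact integral_abs_sub μ (x i) (x (i - 1)) (hmeas i h1) (hmeas _ h2)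
      (hdist i h1) (hdist _ h2) hk1 hind
  rw [Finset.sum_congr rfl hterm, sum_Icc_const]
  have hcast : ((n - 1 : ℕ) : ℝ) = (n : ℝ) - 1 := by
    rw [Nat.cast_sub (by omega)]; simp
  rw [hcast]
  simp only [measure_univ, probReal_univ, ENNReal.toReal_one, smul_eq_mul, one_mul]
  have hk0 : (k : ℝ) ≠ 0 := by positivity
  field_simp
  ring
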